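/- Let p_1, …, p_K ∈ ℝ^d be pairwise distinct sites with labels λ_1, …, λ_K ∈ {0,1}, with at least one label equal to 1 and at least one equal to 0, and let q ∈ ℝ^d with q ∉ {p_1, …, p_K} be a new site assigned label 1. If the Voronoi cell of q in the augmented diagram, namely {x ∈ ℝ^d : ‖x − q‖ ≤ ‖x − p_k‖ for all k}, is contained in the Voronoi occupancy set O(P,λ), then the Voronoi occupancy set of the augmented configuration equals that of the original: O(P ∪ {q}, λ with λ_q = 1) = O(P, λ). -/
import Mathlib


/-- The Voronoi occupancy set of labeled sites: points whose distance to the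
nearest `true`-labeled site is at most the distance to the nearest
`false`-labeled site. -/
noncomputable def voronoiOcc {d K : ℕ} (p : Fin K → EuclideanSpace ℝ (Fin d))
    (lab : Fin K → Bool) : Set (EuclideanSpace ℝ (Fin d)) :=
  {x | (⨅ k : {k : Fin K // lab k = true}, dist x (p k.1)) ≤
       ⨅ k : {k : Fin K // lab k = false}, dist x (p k.1)}

theorem occupancy_unchanged_if_cell_inside {d K : ℕ}
    (p : Fin K → EuclideanSpace ℝ (Fin d)) (lab : Fin K → Bool)
    (hinj : Function.Injective p)
    (h1 : ∃ k, lab k = true) (h0 : ∃ k, lab k = false)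
    (q : EuclideanSpace ℝ (Fin d)) (hq : ∀ k, q ≠ p k)
    (hcell : {x : EuclideanSpace ℝ (Fin d) | ∀ k, dist x q ≤ dist x (p k)} ⊆
      voronoiOcc p lab) :
    voronoiOcc (Fin.snoc p q) (Fin.snoc lab true) = voronoiOcc p lab := by
  obtain ⟨kt, hkt⟩ := h1
  obtain ⟨kf, hkf⟩ := h0
  set p' : Fin (K+1) → EuclideanSpace ℝ (Fin d) := Fin.snoc p q with hp'
  set lab' : Fin (K+1) → Bool := Fin.snoc lab true with hlab'
  have hlabcast : ∀ j : Fin K, lab' j.castSucc = lab j := by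
    intro j; simp [hlab']
  have hlablast : lab' (Fin.last K) = true := by simp [hlab']
  have hpcast : ∀ j : Fin K, p' j.castSucc = p j := by
    intro j; simp [hp']
  have hplast : p' (Fin.last K) = q := by simp [hp']
  have hT : Nonempty {k : Fin K // lab k = true} := ⟨⟨kt, hkt⟩⟩
  have hF : Nonempty {k : Fin K // lab k = false} := ⟨⟨kf, hkf⟩⟩
  have hT' : Nonempty {k : Fin (K+1) // lab' k = true} := ⟨⟨Fin.last K, hlablast⟩⟩
  have hF' : Nonempty {k : Fin (K+1) // lab' k = false} :=
    ⟨⟨kf.castSucc, by rw [hlabcast]; exact hkf⟩⟩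
  have cle : ∀ (x : EuclideanSpace ℝ (Fin d)) {ι : Type}
      (f : ι → EuclideanSpace ℝ (Fin d)) (i : ι),
      (⨅ j, dist x (f j)) ≤ dist x (f i) := by
    intro x ι f i
    exact ciInf_le ⟨0, by rintro _ ⟨j, rfl⟩; exact dist_nonneg⟩ i
  ext x
  simp only [voronoiOcc, Set.mem_setOf_eq]
  set T := ⨅ k : {k : Fin K // lab k = true}, dist x (p k.1) with hTdef
  set F := ⨅ k : {k : Fin K // lab k = false}, dist x (p k.1) with hFdef
  have hFalse : (⨅ k : {k : Fin (K+1) // lab' k = false}, dist x (p' k.1)) = F := by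
    apply le_antisymm
    · apply le_ciInf
      rintro ⟨k, hk⟩
      have := cle x (fun j : {j : Fin (K+1) // lab' j = false} => p' j.1)
        ⟨k.castSucc, by rw [hlabcast]; exact hk⟩
      simpa [hpcast] using this
    · apply le_ciInf
      rintro ⟨k, hk⟩
      rcases Fin.eq_castSucc_or_eq_last k with ⟨j, rfl⟩ | rfl
      · rw [hlabcast] at hk
        have := cle x (fun j : {j : Fin K // lab j = false} => p j.1) ⟨j, hk⟩
        simpa [hpcast] using this
      · rw [hlablast] at hk; exact absurd hk (by simp)
  rw [hFalse]
  set T' := ⨅ k : {k : Fin (K+1) // lab' k = true}, dist x (p' k.1) with hT'def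
  have hT'le : T' ≤ T := by
    apply le_ciInf
    rintro ⟨k, hk⟩
    have := cle x (fun j : {j : Fin (K+1) // lab' j = true} => p' j.1)
      ⟨k.castSucc, by rw [hlabcast]; exact hk⟩
    simpa [hpcast] using this
  have hminT' : min (dist x q) T ≤ T' := by
    apply le_ciInf
    rintro ⟨k, hk⟩
    rcases Fin.eq_castSucc_or_eq_last k with ⟨j, rfl⟩ | rfl
    · rw [hlabcast] at hk
      rw [hpcast]
      exact le_trans (min_le_right _ _)
        (cle x (fun j : {j : Fin K // lab j = true} => p j.1) ⟨j, hk⟩)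
    · rw [hplast]
      exact min_le_left _ _
  constructor
  · intro h
    by_contra hc
    push_neg at hc
    have hqF : dist x q ≤ F := by
      have hm := le_trans hminT' h
      rcases min_cases (dist x q) T with ⟨heq, _⟩ | ⟨heq, _⟩
      · rwa [heq] at hm
      · rw [heq] at hm; exact absurd hm (not_le.2 hc)
    have hxcell : x ∈ {y : EuclideanSpace ℝ (Fin d) | ∀ k, dist y q ≤ dist y (p k)} := by
      intro k
      cases hlk : lab k with
      | true =>
          have := cle x (fun j : {j : Fin K // lab j = true} => p j.1) ⟨k, hlk⟩
          exact le_trans (le_of_lt (lt_of_le_of_lt hqF hc)) this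
      | false =>
          have := cle x (fun j : {j : Fin K // lab j = false} => p j.1) ⟨k, hlk⟩
          exact le_trans hqF this
    exact absurd (hcell hxcell) (by simpa [voronoiOcc] using hc.not_ge)
  · intro h
    exact le_trans hT'le h
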